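/- For every d ∈ (0,1), every A > 0 and every positive even integer k, the WENO-IM(k,A) mapping function is monotonically non-decreasing on [0,1]: for all 0 ≤ ω₁ ≤ ω₂ ≤ 1, g(ω₁) ≤ g(ω₂). -/

import Mathlib

/-- The WENO-IM(k,A) mapping function of Feng et al. -/
noncomputable def gIM (d A : ℝ) (k : ℕ) (ω : ℝ) : ℝ :=
  d + (ω - d) ^ (k + 1) * A / ((ω - d) ^ k * A + ω * (1 - ω))

/-- For every `d ∈ (0,1)`, `A > 0` and positive even integer `k`, the WENO-IM(k,A)
mapping function is monotonically non-decreasing on `[0,1]`. -/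
theorem wenoIM_monotone (d A : ℝ) (hd : d ∈ Set.Ioo (0 : ℝ) 1) (hA : 0 < A)
    (k : ℕ) (hk : 0 < k) (hke : Even k) :
    MonotoneOn (gIM d A k) (Set.Icc (0 : ℝ) 1) := by
  obtain ⟨hd0, hd1⟩ := hd
  obtain ⟨m, rfl⟩ : ∃ m, k = m + 1 := ⟨k - 1, (Nat.succ_pred_eq_of_pos hk).symm⟩
  -- denominator is positive on [0,1]
  have hv : ∀ x ∈ Set.Icc (0:ℝ) 1, 0 < (x - d) ^ (m+1) * A + x * (1 - x) := by
    intro x hx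
    rcases eq_or_ne x d with h | h
    · have h0 : (x - d) ^ (m+1) = 0 := by
        rw [h, sub_self, zero_pow (Nat.succ_ne_zero m)]
      rw [h0, h]
      nlinarith
    · have h1 : 0 < (x - d) ^ (m+1) := hke.pow_pos (sub_ne_zero.mpr h)
      have h2 : 0 ≤ x * (1 - x) := mul_nonneg hx.1 (by linarith [hx.2])
      nlinarith
  have hgim : gIM d A (m+1)
      = fun ω => d + (ω - d) ^ (m+2) * A / ((ω - d) ^ (m+1) * A + ω * (1 - ω)) := rfl
  have hcont : ContinuousOn (gIM d A (m+1)) (Set.Icc (0:ℝ) 1) := by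
    rw [hgim]
    apply ContinuousOn.add continuousOn_const
    apply ContinuousOn.div (by fun_prop) (by fun_prop)
    intro x hx; exact (hv x hx).ne'
  -- derivative on the interior
  have hderiv : ∀ x ∈ Set.Ioo (0:ℝ) 1, HasDerivAt (gIM d A (m+1))
      (((((m:ℝ)+2) * (x-d)^(m+1) * A) * ((x-d)^(m+1)*A + x*(1-x))
        - (x-d)^(m+2)*A * ((((m:ℝ)+1)*(x-d)^m*A) + (1 - 2*x)))
        / ((x-d)^(m+1)*A + x*(1-x))^2) x := by
    intro x hx
    have hu : HasDerivAt (fun ω : ℝ => (ω - d)^(m+2) * A)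
        (((m:ℝ)+2) * (x-d)^(m+1) * A) x := by
      have h := (((hasDerivAt_id x).sub_const d).pow (m+2)).mul_const A
      convert h using 1
      any_goals rfl
      push_cast
      simp
    have hv1 : HasDerivAt (fun ω : ℝ => (ω-d)^(m+1)*A + ω*(1-ω))
        ((((m:ℝ)+1)*(x-d)^m*A) + (1 - 2*x)) x := by
      have h1 := (((hasDerivAt_id x).sub_const d).pow (m+1)).mul_const A
      have h2 := (hasDerivAt_id x).mul ((hasDerivAt_const x (1:ℝ)).sub (hasDerivAt_id x))
      convert h1.add h2 using 1
      any_goals rfl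
      push_cast
      simp
      ring
    have hx0 : (x-d)^(m+1)*A + x*(1-x) ≠ 0 :=
      (hv x (Set.mem_Icc_of_Ioo hx)).ne'
    have h := (hu.div hv1 hx0).const_add d
    rw [hgim]
    exact h
  apply monotoneOn_of_deriv_nonneg (convex_Icc 0 1) hcont
  · intro x hx
    rw [interior_Icc] at hx
    exact ((hderiv x hx).differentiableAt).differentiableWithinAt
  · intro x hx
    rw [interior_Icc] at hx
    rw [(hderiv x hx).deriv]
    apply div_nonneg _ (sq_nonneg _)
    have key : (((m:ℝ)+2) * (x-d)^(m+1) * A) * ((x-d)^(m+1)*A + x*(1-x))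
        - (x-d)^(m+2)*A * ((((m:ℝ)+1)*(x-d)^m*A) + (1 - 2*x))
        = A * (x-d)^(m+1) *
          ((x-d)^(m+1)*A + (m:ℝ)*(x*(1-x)) + (x*(1-d) + d*(1-x))) := by
      ring
    rw [key]
    have h1 : (0:ℝ) ≤ (x-d)^(m+1) := hke.pow_nonneg _
    have h2 : (0:ℝ) ≤ x*(1-x) := mul_nonneg hx.1.le (by linarith [hx.2])
    have h3 : (0:ℝ) ≤ (m:ℝ) := Nat.cast_nonneg m
    have h4 : (0:ℝ) ≤ x*(1-d) := mul_nonneg hx.1.le (by linarith)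
    have h5 : (0:ℝ) ≤ d*(1-x) := mul_nonneg hd0.le (by linarith [hx.2])
    have h6 : (0:ℝ) ≤ (m:ℝ)*(x*(1-x)) := mul_nonneg h3 h2
    positivity
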